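/- For each r ∈ (0,1], there is a unique group-wise mass-threshold classifier T̃_{t_A,t_D} such that the false positive rate on group A and on group D both equal r. -/
import Mathlib


open Finset

/-- `P` is a probability distribution on `X × Z × Y` with `Z = Bool` (group, `true` = A,
`false` = D) and `Y = Bool` (label, `true` = 1). -/
def IsDist {X : Type*} [Fintype X] (P : X × Bool × Bool → ℝ) : Prop :=
  (∀ p, 0 ≤ P p) ∧ ∑ p : X × Bool × Bool, P p = 1

/-- mass of the feature-group cell `(x, z)`. -/
noncomputable def cellMass {X : Type*} (P : X × Bool × Bool → ℝ) (x : X) (z : Bool) : ℝ :=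
  P (x, z, false) + P (x, z, true)

/-- total mass of group `z`. -/
noncomputable def gMass {X : Type*} [Fintype X] (P : X × Bool × Bool → ℝ) (z : Bool) : ℝ :=
  ∑ x, cellMass P x z

/-- score of the cell `(x, z)`: `Pr[Y = 1 | X = x, Z = z]`. -/
noncomputable def score {X : Type*} (P : X × Bool × Bool → ℝ) (x : X) (z : Bool) : ℝ :=
  P (x, z, true) / cellMass P x z

/-- A randomized classifier takes values in `[0,1]`. -/
def InUnit {X : Type*} (f : X × Bool → ℝ) : Prop := ∀ p, f p ∈ Set.Icc (0 : ℝ) 1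

/-- selection rate of randomized classifier `f` on group `z`: `E[f(X,Z) | Z = z]`. -/
noncomputable def selRate {X : Type*} [Fintype X] (P : X × Bool × Bool → ℝ) (f : X × Bool → ℝ)
    (z : Bool) : ℝ :=
  (∑ x, f (x, z) * cellMass P x z) / gMass P z

/-- 0-1 loss of randomized classifier `f` under `P`. -/
noncomputable def loss {X : Type*} [Fintype X] (P : X × Bool × Bool → ℝ) (f : X × Bool → ℝ) : ℝ :=
  ∑ x, ∑ z, (P (x, z, true) * (1 - f (x, z)) + P (x, z, false) * f (x, z))

/-- Demographic parity: equal selection rates on the two groups. -/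
def DP {X : Type*} [Fintype X] (P : X × Bool × Bool → ℝ) (f : X × Bool → ℝ) : Prop :=
  selRate P f true = selRate P f false

/-- false positive rate of `f` on group `z`: `E[f(X,Z) | Y = 0, Z = z]`. -/
noncomputable def fpr {X : Type*} [Fintype X] (P : X × Bool × Bool → ℝ) (f : X × Bool → ℝ)
    (z : Bool) : ℝ :=
  (∑ x, f (x, z) * P (x, z, false)) / (∑ x, P (x, z, false))

/-- `f` is a (group-wise) mass-threshold classifier: within each group it accepts a
prefix of the cells sorted in decreasing order of score (fractionally at the boundary). -/
def IsPrefix {X : Type*} (P : X × Bool × Bool → ℝ) (f : X × Bool → ℝ) : Prop :=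
  ∀ z x x', 0 < cellMass P x z → 0 < cellMass P x' z →
    score P x' z < score P x z → 0 < f (x', z) → f (x, z) = 1

/-- cells of equal score within a group have been merged, i.e. scores of distinct
positive-mass cells within a group are distinct ("strictly decreasing" when sorted). -/
def MergedScores {X : Type*} (P : X × Bool × Bool → ℝ) : Prop :=
  ∀ z x x', 0 < cellMass P x z → 0 < cellMass P x' z → score P x z = score P x' z → x = x'

/-- For each `r ∈ (0,1]` there is a unique group-wise mass-threshold classifier whose
false positive rate equals `r` on both groups. -/

lemma exists_prefix_sum {X : Type*} [Fintype X] (s w : X → ℝ) (hw : ∀ x, 0 ≤ w x)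
    (hW : 0 < ∑ x, w x) (r : ℝ) (hr : r ∈ Set.Ioc (0:ℝ) 1) :
    ∃ f : X → ℝ, (∀ x, f x ∈ Set.Icc (0:ℝ) 1) ∧
      (∀ x x', s x' < s x → 0 < f x' → f x = 1) ∧
      ∑ x, f x * w x = r * ∑ x, w x := by
  cases isEmpty_or_nonempty X with
  | inl h => simp at hW
  | inr hne =>
  set c : ℝ := 1 + ∑ x : X, ∑ x' : X, (if s x' < s x then (s x - s x')⁻¹ else 0) with hcdef
  have hterm : ∀ x x' : X, 0 ≤ (if s x' < s x then (s x - s x')⁻¹ else 0) := by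
    intro x x'
    split
    · rename_i h; have : 0 < s x - s x' := by linarith
      positivity
    · exact le_refl _
  have hS : 0 ≤ ∑ x : X, ∑ x' : X, (if s x' < s x then (s x - s x')⁻¹ else 0) :=
    Finset.sum_nonneg fun x _ => Finset.sum_nonneg fun x' _ => hterm x x'
  have hc0 : (0:ℝ) < c := by rw [hcdef]; linarith
  have hcgap : ∀ x x', s x' < s x → 1 ≤ c * (s x - s x') := by
    intro x x' hlt
    have hd : 0 < s x - s x' := by linarith
    have h1 : (s x - s x')⁻¹ ≤ ∑ x'' : X, (if s x'' < s x then (s x - s x'')⁻¹ else 0) := by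
      have := Finset.single_le_sum (f := fun x'' => if s x'' < s x then (s x - s x'')⁻¹ else 0)
        (fun i _ => hterm x i) (Finset.mem_univ x')
      simpa [hlt] using this
    have h2 : (∑ x'' : X, (if s x'' < s x then (s x - s x'')⁻¹ else 0)) ≤
        ∑ y : X, ∑ x'' : X, (if s x'' < s y then (s y - s x'')⁻¹ else 0) :=
      Finset.single_le_sum (f := fun y => ∑ x'' : X, (if s x'' < s y then (s y - s x'')⁻¹ else 0))
        (fun i _ => Finset.sum_nonneg fun j _ => hterm i j) (Finset.mem_univ x)
    have hinv : (s x - s x')⁻¹ ≤ c := by linarith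
    calc (1:ℝ) = (s x - s x')⁻¹ * (s x - s x') := by field_simp
    _ ≤ c * (s x - s x') := by
        exact mul_le_mul_of_nonneg_right hinv hd.le
  obtain ⟨a, -, ha⟩ := Finset.exists_min_image Finset.univ s ⟨Classical.arbitrary X, Finset.mem_univ _⟩
  obtain ⟨b, -, hb⟩ := Finset.exists_max_image Finset.univ s ⟨Classical.arbitrary X, Finset.mem_univ _⟩
  set F : ℝ → ℝ := fun t => ∑ x, (max 0 (min 1 (c * (s x - t)))) * w x with hFdef
  have hcont : Continuous F := by
    apply continuous_finset_sum; intro x _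
    exact ((continuous_const.max ((continuous_const.min
      (continuous_const.mul (continuous_const.sub continuous_id))))).mul continuous_const)
  have hFa : F (s a - 1/c) = ∑ x, w x := by
    apply Finset.sum_congr rfl
    intro x _
    have h1 : (1:ℝ) ≤ c * (s x - (s a - 1/c)) := by
      have h2 : 0 ≤ c * (s x - s a) := mul_nonneg hc0.le (sub_nonneg.mpr (ha x (Finset.mem_univ x)))
      have h3 : c * (1/c) = 1 := by field_simp
      nlinarith
    rw [min_eq_left h1, max_eq_right zero_le_one, one_mul]
  have hFb : F (s b) = 0 := by
    apply Finset.sum_eq_zero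
    intro x _
    have h1 : c * (s x - s b) ≤ 0 :=
      mul_nonpos_of_nonneg_of_nonpos hc0.le (sub_nonpos.mpr (hb x (Finset.mem_univ x)))
    have : max 0 (min 1 (c * (s x - s b))) = 0 :=
      max_eq_left (le_trans (min_le_right _ _) h1)
    rw [this, zero_mul]
  have hle : s a - 1/c ≤ s b := by
    have h1 : (0:ℝ) < 1/c := by positivity
    have := ha b (Finset.mem_univ b)
    linarith
  have hmem : r * ∑ x, w x ∈ Set.Icc (F (s b)) (F (s a - 1/c)) := by
    rw [hFa, hFb]
    constructor
    · exact mul_nonneg hr.1.le hW.le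
    · nlinarith [hr.1, hr.2]
  obtain ⟨t, -, htF⟩ := intermediate_value_Icc' hle hcont.continuousOn hmem
  refine ⟨fun x => max 0 (min 1 (c * (s x - t))), fun x => ⟨le_max_left _ _,
    max_le zero_le_one (min_le_left _ _)⟩, ?_, htF⟩
  intro x x' hs hpos
  have h1 : 0 < min 1 (c * (s x' - t)) := by
    rcases lt_max_iff.mp hpos with h | h
    · exact absurd h (lt_irrefl 0)
    · exact h
  have h2 : 0 < c * (s x' - t) := lt_of_lt_of_le h1 (min_le_right _ _)
  have h3 : (1:ℝ) ≤ c * (s x - t) := by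
    have := hcgap x x' hs
    nlinarith
  show max 0 (min 1 (c * (s x - t))) = 1
  rw [min_eq_left h3, max_eq_right zero_le_one]

lemma exch {X : Type*} [Fintype X] (P : X × Bool × Bool → ℝ) (hP0 : ∀ p, 0 ≤ P p)
    (hm : MergedScores P) (z : Bool) (f g : X × Bool → ℝ)
    (hf : InUnit f) (hg : InUnit g) (hfp : IsPrefix P f) (hgp : IsPrefix P g)
    (a b : X) (hwa : 0 < P (a, z, false)) (hwb : 0 < P (b, z, false))
    (h1 : g (a, z) < f (a, z)) (h2 : f (b, z) < g (b, z)) : False := by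
  have hma : 0 < cellMass P a z := by
    have := hP0 (a, z, true); unfold cellMass; linarith
  have hmb : 0 < cellMass P b z := by
    have := hP0 (b, z, true); unfold cellMass; linarith
  have hab : a ≠ b := by rintro rfl; linarith
  have hsne : score P a z ≠ score P b z := fun h => hab (hm z a b hma hmb h)
  rcases hsne.lt_or_gt with hlt | hlt
  · -- s a < s b : f a > g a ≥ 0 so f a > 0, prefix f gives f b = 1, but g b > f b = 1 contra g ≤ 1
    have hfa : 0 < f (a, z) := lt_of_le_of_lt (hg (a, z)).1 h1
    have := hfp z b a hmb hma hlt hfa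
    have := (hg (b, z)).2
    linarith
  · have hgb : 0 < g (b, z) := lt_of_le_of_lt (hf (b, z)).1 h2
    have := hgp z a b hma hmb hlt hgb
    have := (hf (a, z)).2
    linarith

lemma uniq_group {X : Type*} [Fintype X] (P : X × Bool × Bool → ℝ) (hP0 : ∀ p, 0 ≤ P p)
    (hm : MergedScores P) (z : Bool) (f g : X × Bool → ℝ)
    (hf : InUnit f) (hg : InUnit g) (hfp : IsPrefix P f) (hgp : IsPrefix P g)
    (hsum : ∑ x, f (x, z) * P (x, z, false) = ∑ x, g (x, z) * P (x, z, false))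
    (hpos : 0 < ∑ x, f (x, z) * P (x, z, false)) :
    ∀ x, 0 < cellMass P x z → f (x, z) = g (x, z) := by
  have key : ∀ x, 0 < P (x, z, false) → f (x, z) = g (x, z) := by
    have hdir : (∀ x, 0 < P (x, z, false) → f (x, z) ≤ g (x, z)) ∨
        (∀ x, 0 < P (x, z, false) → g (x, z) ≤ f (x, z)) := by
      by_contra hcon
      push_neg at hcon
      obtain ⟨⟨a, hwa, h1⟩, ⟨b, hwb, h2⟩⟩ := hcon
      exact exch P hP0 hm z f g hf hg hfp hgp a b hwa hwb h1 h2
    have hterm : ∀ x, 0 < P (x, z, false) → (f (x, z) - g (x, z)) * P (x, z, false) = 0 := by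
      rcases hdir with hd | hd
      · have hnn : ∀ x ∈ Finset.univ, 0 ≤ (g (x, z) - f (x, z)) * P (x, z, false) := by
          intro x _
          rcases lt_or_eq_of_le (hP0 (x, z, false)) with h | h
          · exact mul_nonneg (by linarith [hd x h]) h.le
          · rw [← h, mul_zero]
        have hz : ∑ x, (g (x, z) - f (x, z)) * P (x, z, false) = 0 := by
          simp only [sub_mul]
          rw [Finset.sum_sub_distrib]
          linarith
        intro x hx
        have := (Finset.sum_eq_zero_iff_of_nonneg hnn).mp hz x (Finset.mem_univ x)
        linarith [this]
      · have hnn : ∀ x ∈ Finset.univ, 0 ≤ (f (x, z) - g (x, z)) * P (x, z, false) := by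
          intro x _
          rcases lt_or_eq_of_le (hP0 (x, z, false)) with h | h
          · exact mul_nonneg (by linarith [hd x h]) h.le
          · rw [← h, mul_zero]
        have hz : ∑ x, (f (x, z) - g (x, z)) * P (x, z, false) = 0 := by
          simp only [sub_mul]
          rw [Finset.sum_sub_distrib]
          linarith
        intro x hx
        exact (Finset.sum_eq_zero_iff_of_nonneg hnn).mp hz x (Finset.mem_univ x)
    intro x hx
    have := hterm x hx
    have := mul_eq_zero.mp this
    rcases this with h | h
    · linarith
    · exact absurd h hx.ne'
  intro x hmx
  rcases lt_or_eq_of_le (hP0 (x, z, false)) with hwx | hwx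
  · exact key x hwx
  · -- w x = 0, score = 1
    have hmt : P (x, z, true) = cellMass P x z := by unfold cellMass; linarith
    have hsx : score P x z = 1 := by rw [score, hmt, div_self hmx.ne']
    -- find a positive-acceptance positive-weight cell for f
    have hex : ∃ x₁, 0 < f (x₁, z) * P (x₁, z, false) := by
      obtain ⟨i, hi⟩ := Finset.exists_lt_of_sum_lt (f := fun _ : X => (0:ℝ))
        (g := fun x => f (x, z) * P (x, z, false)) (by simpa using hpos)
      exact ⟨i, hi.2⟩
    obtain ⟨x₁, hx₁⟩ := hex
    have hfx₁ : 0 < f (x₁, z) := by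
      rcases mul_pos_iff.mp hx₁ with ⟨h1, _⟩ | ⟨h1, h2⟩
      · exact h1
      · exact absurd h2 (not_lt.mpr (hP0 _))
    have hwx₁ : 0 < P (x₁, z, false) := by
      rcases mul_pos_iff.mp hx₁ with ⟨_, h2⟩ | ⟨h1, _⟩
      · exact h2
      · exact absurd h1 (not_lt.mpr ((hf _).1))
    have hmx₁ : 0 < cellMass P x₁ z := by
      have := hP0 (x₁, z, true); unfold cellMass; linarith
    have hsx₁ : score P x₁ z < 1 := by
      rw [score, div_lt_one hmx₁]
      unfold cellMass; linarith
    have hslt : score P x₁ z < score P x z := by rw [hsx]; exact hsx₁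
    -- also for g
    have hexg : ∃ x₂, 0 < g (x₂, z) * P (x₂, z, false) := by
      obtain ⟨i, hi⟩ := Finset.exists_lt_of_sum_lt (f := fun _ : X => (0:ℝ))
        (g := fun x => g (x, z) * P (x, z, false)) (by rw [← hsum]; simpa using hpos)
      exact ⟨i, hi.2⟩
    obtain ⟨x₂, hx₂⟩ := hexg
    have hgx₂ : 0 < g (x₂, z) := by
      rcases mul_pos_iff.mp hx₂ with ⟨h1, _⟩ | ⟨h1, h2⟩
      · exact h1
      · exact absurd h2 (not_lt.mpr (hP0 _))
    have hwx₂ : 0 < P (x₂, z, false) := by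
      rcases mul_pos_iff.mp hx₂ with ⟨_, h2⟩ | ⟨h1, _⟩
      · exact h2
      · exact absurd h1 (not_lt.mpr ((hg _).1))
    have hmx₂ : 0 < cellMass P x₂ z := by
      have := hP0 (x₂, z, true); unfold cellMass; linarith
    have hsx₂ : score P x₂ z < score P x z := by
      rw [hsx, score, div_lt_one hmx₂]
      unfold cellMass; linarith
    rw [hfp z x x₁ hmx hmx₁ hslt hfx₁, hgp z x x₂ hmx hmx₂ hsx₂ hgx₂]

theorem stmt10 {X : Type*} [Fintype X] (P : X × Bool × Bool → ℝ) (hP : IsDist P)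
    (hm : MergedScores P) (h0 : ∀ z, 0 < ∑ x, P (x, z, false))
    (r : ℝ) (hr : r ∈ Set.Ioc (0 : ℝ) 1) :
    (∃ f : X × Bool → ℝ, InUnit f ∧ IsPrefix P f ∧ ∀ z, fpr P f z = r) ∧
    ∀ f g : X × Bool → ℝ,
      (InUnit f ∧ IsPrefix P f ∧ ∀ z, fpr P f z = r) →
      (InUnit g ∧ IsPrefix P g ∧ ∀ z, fpr P g z = r) →
      ∀ x z, 0 < cellMass P x z → f (x, z) = g (x, z) := by
  constructor
  · have H : ∀ z : Bool, ∃ fz : X → ℝ, (∀ x, fz x ∈ Set.Icc (0:ℝ) 1) ∧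
        (∀ x x', score P x' z < score P x z → 0 < fz x' → fz x = 1) ∧
        ∑ x, fz x * P (x, z, false) = r * ∑ x, P (x, z, false) := fun z =>
      exists_prefix_sum (fun x => score P x z) (fun x => P (x, z, false))
        (fun x => hP.1 _) (h0 z) r hr
    choose fz h1 h2 h3 using H
    refine ⟨fun p => fz p.2 p.1, fun p => h1 p.2 p.1, ?_, ?_⟩
    · intro z x x' _ _ hs hpos
      exact h2 z x x' hs hpos
    · intro z
      unfold fpr
      show (∑ x, fz z x * P (x, z, false)) / (∑ x, P (x, z, false)) = r
      rw [h3 z, mul_div_assoc, div_self (h0 z).ne', mul_one]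
  · rintro f g ⟨hfU, hfP, hfr⟩ ⟨hgU, hgP, hgr⟩ x z hmx
    have hsumf : ∑ x, f (x, z) * P (x, z, false) = r * ∑ x, P (x, z, false) := by
      have h := hfr z
      unfold fpr at h
      exact (div_eq_iff (h0 z).ne').mp h
    have hsumg : ∑ x, g (x, z) * P (x, z, false) = r * ∑ x, P (x, z, false) := by
      have h := hgr z
      unfold fpr at h
      exact (div_eq_iff (h0 z).ne').mp h
    have hsum : ∑ x, f (x, z) * P (x, z, false) = ∑ x, g (x, z) * P (x, z, false) := by
      rw [hsumf, hsumg]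
    have hpos : 0 < ∑ x, f (x, z) * P (x, z, false) := by
      rw [hsumf]; exact mul_pos hr.1 (h0 z)
    exact uniq_group P hP.1 hm z f g hfU hgU hfP hgP hsum hpos x hmx
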